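/- Let (Λ_i)_{0 ≤ i ≤ N} be integers with Λ_{i+1} ≥ Λ_i - 1, and let Λ_min = min_i Λ_i. Extend cyclically by Λ_{N+i} = Λ_i. For an index i with Λ_i > Λ_min, define the successor succ(i) as the first j ∈ {i+1, …, i+N-1} with Λ_j = Λ_i - 1, and define φ_{(i)}(k) = min{ j ∈ {i, …, i+N-1} : Λ_j = Λ_i - k } for 0 ≤ k ≤ Λ_i - Λ_min. Then φ_{(i)}(k+1) = succ(φ_{(i)}(k)) for every 0 ≤ k < Λ_i - Λ_min, and Λ_{φ_{(i)}(k)} = Λ_i - k. -/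

import Mathlib

theorem stmt_13 (N : ℕ) (hN : 1 ≤ N) (Λ : ℕ → ℤ)
    (hper : ∀ i : ℕ, Λ (i + N) = Λ i)
    (hstep : ∀ i : ℕ, Λ (i+1) ≥ Λ i - 1)
    (m : ℤ) (hm : ∀ i : ℕ, m ≤ Λ i) (hmex : ∃ i : ℕ, Λ i = m)
    (succ : ℕ → ℕ)
    (hsucc : ∀ a : ℕ, m < Λ a →
      succ a = sInf {j : ℕ | a < j ∧ j ≤ a + N - 1 ∧ Λ j = Λ a - 1})
    (i : ℕ) (hi : m < Λ i)
    (φ : ℕ → ℕ)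
    (hφ : ∀ k : ℕ, (k : ℤ) ≤ Λ i - m →
      φ k = sInf {j : ℕ | i ≤ j ∧ j ≤ i + N - 1 ∧ Λ j = Λ i - k}) :
    (∀ k : ℕ, (k : ℤ) ≤ Λ i - m → Λ (φ k) = Λ i - k) ∧
    (∀ k : ℕ, (k : ℤ) < Λ i - m → φ (k+1) = succ (φ k)) := by
  -- Λ only depends on the residue mod N
  have hmod : ∀ x : ℕ, Λ x = Λ (x % N) := by
    intro x
    induction x using Nat.strong_induction_on with
    | _ x ih =>
      rcases lt_or_ge x N with h | h
      · rw [Nat.mod_eq_of_lt h]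
      · have hx : x = (x - N) + N := by omega
        rw [hx, hper (x - N), ih (x - N) (by omega), Nat.add_mod_right]
  -- discrete intermediate value theorem (downwards)
  have hIVT : ∀ a b : ℕ, a ≤ b → ∀ v : ℤ, Λ b ≤ v → v ≤ Λ a →
      ∃ j, a ≤ j ∧ j ≤ b ∧ Λ j = v := by
    intro a b hab v hvb hva
    have hb : b ∈ {j : ℕ | a ≤ j ∧ Λ j ≤ v} := ⟨hab, hvb⟩
    have hne : Set.Nonempty {j : ℕ | a ≤ j ∧ Λ j ≤ v} := ⟨b, hb⟩
    have hj := Nat.sInf_mem hne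
    set j := sInf {j : ℕ | a ≤ j ∧ Λ j ≤ v} with hjdef
    refine ⟨j, hj.1, Nat.sInf_le hb, ?_⟩
    rcases Nat.eq_or_lt_of_le hj.1 with h | h
    · have hΛ : Λ j = Λ a := by rw [← h]
      have := hj.2
      omega
    · have hnot : j - 1 ∉ {j : ℕ | a ≤ j ∧ Λ j ≤ v} :=
        Nat.notMem_of_lt_sInf (by omega)
      have h2 : ¬ Λ (j - 1) ≤ v := fun hle => hnot ⟨by omega, hle⟩
      have h3 := hstep (j - 1)
      have hjj : j - 1 + 1 = j := by omega
      rw [hjj] at h3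
      have := hj.2
      omega
  -- there is a point in [i, i+N-1] where the minimum is attained
  obtain ⟨a0, ha0⟩ := hmex
  have hminwin : ∃ a', i ≤ a' ∧ a' ≤ i + N - 1 ∧ Λ a' = m := by
    have hiN : i % N < N := Nat.mod_lt _ (by omega)
    have ha0N : a0 % N < N := Nat.mod_lt _ (by omega)
    have hidm : i / N * N + i % N = i := Nat.div_add_mod' i N
    rcases le_or_gt (i % N) (a0 % N) with h | h
    · refine ⟨a0 % N + (i / N) * N, by omega, by omega, ?_⟩
      rw [hmod, Nat.add_mul_mod_self_right, Nat.mod_eq_of_lt ha0N, ← hmod, ha0]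
    · have hexp : (i / N + 1) * N = i / N * N + N := by ring
      refine ⟨a0 % N + (i / N + 1) * N, by omega, by omega, ?_⟩
      rw [hmod, Nat.add_mul_mod_self_right, Nat.mod_eq_of_lt ha0N, ← hmod, ha0]
  obtain ⟨a', ha'1, ha'2, ha'3⟩ := hminwin
  -- the defining set of φ k is nonempty, and φ k belongs to it
  have hkey : ∀ k : ℕ, (k : ℤ) ≤ Λ i - m →
      i ≤ φ k ∧ φ k ≤ i + N - 1 ∧ Λ (φ k) = Λ i - k := by
    intro k hk
    obtain ⟨j, hj1, hj2, hj3⟩ := hIVT i a' ha'1 (Λ i - k) (by omega) (by omega)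
    have hne : Set.Nonempty {j : ℕ | i ≤ j ∧ j ≤ i + N - 1 ∧ Λ j = Λ i - k} :=
      ⟨j, hj1, by omega, hj3⟩
    rw [hφ k hk]
    exact Nat.sInf_mem hne
  refine ⟨fun k hk => (hkey k hk).2.2, fun k hk => ?_⟩
  obtain ⟨hp1, hp2, hp3⟩ := hkey k (le_of_lt hk)
  set p := φ k with hpdef
  have hk1 : ((k + 1 : ℕ) : ℤ) ≤ Λ i - m := by push_cast; omega
  obtain ⟨hq1, hq2, hq3⟩ := hkey (k + 1) hk1
  set q := φ (k + 1) with hqdef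
  have hq3' : Λ q = Λ i - k - 1 := by push_cast at hq3; omega
  have hmp : m < Λ p := by omega
  rw [hsucc p hmp]
  -- S1 ⊆ S2
  have hsub : ∀ j : ℕ, i ≤ j → j ≤ i + N - 1 → Λ j = Λ i - k - 1 →
      p < j ∧ j ≤ p + N - 1 ∧ Λ j = Λ p - 1 := by
    intro j hj1 hj2 hj3
    have hpj : p < j := by
      by_contra hle
      push_neg at hle
      obtain ⟨j', hj'1, hj'2, hj'3⟩ := hIVT i j hj1 (Λ i - k) (by omega) (by omega)
      have hpj' : p ≤ j' := by
        rw [hpdef, hφ k (le_of_lt hk)]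
        exact Nat.sInf_le ⟨hj'1, by omega, hj'3⟩
      have hje : j' = j := by omega
      rw [hje, hj3] at hj'3
      omega
    exact ⟨hpj, by omega, by omega⟩
  have hqS2 : q ∈ {j : ℕ | p < j ∧ j ≤ p + N - 1 ∧ Λ j = Λ p - 1} :=
    hsub q hq1 hq2 hq3'
  have hne2 : Set.Nonempty {j : ℕ | p < j ∧ j ≤ p + N - 1 ∧ Λ j = Λ p - 1} := ⟨q, hqS2⟩
  obtain ⟨hs1, hs2, hs3⟩ := Nat.sInf_mem hne2
  set s := sInf {j : ℕ | p < j ∧ j ≤ p + N - 1 ∧ Λ j = Λ p - 1} with hsdef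
  have hsq : s ≤ q := Nat.sInf_le hqS2
  have hqs : q ≤ s := by
    rw [hqdef, hφ (k + 1) hk1]
    refine Nat.sInf_le ⟨by omega, by omega, ?_⟩
    push_cast
    omega
  
  omega
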